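/- Let γ > 1, p(v) = v^{-γ}, and define the relative pressure p(v|w) := p(v) - p(w) - p'(w)(v-w). Then for all v, w > 0 with v ≠ w, one has (v-w)²/(w·v·p(v|w)) ≤ w^γ/γ. -/

import Mathlib

/-- Pressure `p(v) = v^(-γ)`. -/
noncomputable def pres (γ v : ℝ) : ℝ := v ^ (-γ)

/-- Relative pressure `p(v|w) = p(v) - p(w) - p'(w)(v-w)` with `p'(w) = -γ w^(-γ-1)`. -/
noncomputable def relPres (γ v w : ℝ) : ℝ :=
  pres γ v - pres γ w - (-γ * w ^ (-γ - 1)) * (v - w)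

/-- Bernoulli-type inequality for negative exponents. -/
lemma bern_neg {γ t : ℝ} (hγ : 1 < γ) (ht : 0 < t) :
    γ - (γ - 1) * t ≤ t ^ (1 - γ) := by
  have hγ0 : 0 < γ := lt_trans one_pos hγ
  rcases le_or_gt (γ - (γ - 1) * t) 0 with h | h
  · exact h.trans (Real.rpow_pos_of_pos ht _).le
  · set u : ℝ := γ - (γ - 1) * t with hu
    have hgm : u ^ (1/γ) * t ^ ((γ-1)/γ) ≤ (1/γ) * u + ((γ-1)/γ) * t := by
      apply Real.geom_mean_le_arith_mean2_weighted
      · positivity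
      · have : (0:ℝ) ≤ γ - 1 := by linarith
        positivity
      · exact h.le
      · exact ht.le
      · field_simp; ring
    have hsum : (1/γ) * u + ((γ-1)/γ) * t = 1 := by
      field_simp [hu]; rw [hu]; ring
    rw [hsum] at hgm
    -- raise to power γ
    have hγne : γ ≠ 0 := ne_of_gt hγ0
    have hbase : 0 ≤ u ^ (1/γ) * t ^ ((γ-1)/γ) := by positivity
    have hp : (u ^ (1/γ) * t ^ ((γ-1)/γ)) ^ γ ≤ 1 ^ γ :=
      Real.rpow_le_rpow hbase hgm hγ0.le
    rw [Real.one_rpow,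
      Real.mul_rpow (Real.rpow_nonneg h.le _) (Real.rpow_nonneg ht.le _)] at hp
    rw [← Real.rpow_mul h.le, ← Real.rpow_mul ht.le,
      one_div_mul_cancel hγne, Real.rpow_one, div_mul_cancel₀ _ hγne] at hp
    -- hp : u * t ^ (γ - 1) ≤ 1
    have htp : 0 < t ^ (γ - 1) := Real.rpow_pos_of_pos ht _
    have hle : u ≤ 1 / t ^ (γ - 1) := by
      rw [le_div_iff₀ htp]; exact hp
    calc u ≤ 1 / t ^ (γ - 1) := hle
      _ = t ^ (-(γ - 1)) := by rw [Real.rpow_neg ht.le, one_div]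
      _ = t ^ (1 - γ) := by norm_num

/-- For `γ > 1` and `v, w > 0` with `v ≠ w`, `(v-w)²/(w·v·p(v|w)) ≤ w^γ/γ`. -/
theorem relative_pressure_quotient_bound (γ : ℝ) (hγ : 1 < γ) (v w : ℝ)
    (hv : 0 < v) (hw : 0 < w) (hvw : v ≠ w) :
    (v - w) ^ 2 / (w * v * relPres γ v w) ≤ w ^ γ / γ := by
  have hγ0 : 0 < γ := lt_trans one_pos hγ
  have hwγ : 0 < w ^ γ := Real.rpow_pos_of_pos hw _
  set t : ℝ := v / w with htdef
  have ht : 0 < t := div_pos hv hw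
  have hvtw : v = t * w := by rw [htdef, div_mul_cancel₀ v hw.ne']
  -- rewrite relPres
  have hrel : relPres γ v w = w ^ (-γ) * (t ^ (-γ) - 1 + γ * (t - 1)) := by
    rw [relPres, pres, pres, hvtw, Real.mul_rpow ht.le hw.le]
    have h1 : w ^ (-γ - 1) * w = w ^ (-γ) := by
      rw [← Real.rpow_add_one hw.ne']
      congr 1; ring
    have : w ^ (-γ - 1) * (t * w - w) = w ^ (-γ) * (t - 1) := by
      calc w ^ (-γ - 1) * (t * w - w) = (w ^ (-γ - 1) * w) * (t - 1) := by ring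
        _ = w ^ (-γ) * (t - 1) := by rw [h1]
    nlinarith [this]
  -- key inequality in t
  have hA : t * t ^ (-γ) = t ^ (1 - γ) := by
    rw [show (1:ℝ) - γ = -γ + 1 from by ring, Real.rpow_add_one ht.ne']
    ring
  have hb := bern_neg hγ ht
  have key : γ * (t - 1) ^ 2 ≤ t * (t ^ (-γ) - 1 + γ * (t - 1)) := by
    nlinarith [hb, hA]
  -- positivity of relPres
  have hwγ' : 0 < w ^ (-γ) := Real.rpow_pos_of_pos hw _
  have ht1 : t ≠ 1 := by
    intro h; apply hvw; rw [hvtw, h, one_mul]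
  have hE : 0 < t ^ (-γ) - 1 + γ * (t - 1) := by
    have h2 : γ * (t - 1) ^ 2 > 0 := by
      have : t - 1 ≠ 0 := sub_ne_zero.mpr ht1
      positivity
    nlinarith [key, ht]
  have hD : 0 < w * v * relPres γ v w := by
    rw [hrel]; positivity
  rw [div_le_div_iff₀ hD hγ0]
  -- goal : (v - w)^2 * γ ≤ w ^ γ * (w * v * relPres γ v w)
  have hcancel : w ^ γ * w ^ (-γ) = 1 := by
    rw [← Real.rpow_add hw]; norm_num
  rw [hrel, hvtw]
  calc (t * w - w) ^ 2 * γ = w ^ 2 * (γ * (t - 1) ^ 2) := by ring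
    _ ≤ w ^ 2 * (t * (t ^ (-γ) - 1 + γ * (t - 1))) := by
        apply mul_le_mul_of_nonneg_left key (by positivity)
    _ = w ^ γ * (w * (t * w) * (w ^ (-γ) * (t ^ (-γ) - 1 + γ * (t - 1)))) := by
        rw [show w ^ γ * (w * (t * w) * (w ^ (-γ) * (t ^ (-γ) - 1 + γ * (t - 1))))
          = (w ^ γ * w ^ (-γ)) * (w ^ 2 * (t * (t ^ (-γ) - 1 + γ * (t - 1)))) from by ring,
          hcancel, one_mul]
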